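/- Let Z be a finite subset of the unit circle in the complex plane. If |Σ_{z ∈ Z} z| = η|Z|, then there is an open arc of the circle of angle measure π containing at least (1/2)(1 + η)|Z| elements of Z. -/

import Mathlib

set_option maxHeartbeats 1000000
open Real MeasureTheory intervalIntegral Finset Complex

noncomputable def fz (x u : ℝ) : ℝ := if 0 < Real.cos (x - u) then Real.cos u else 0

lemma fz_integrable (x a b : ℝ) : IntervalIntegrable (fz x) volume a b := by
  have hs : MeasurableSet {u : ℝ | 0 < Real.cos (x - u)} :=
    measurableSet_lt measurable_const
      ((Real.continuous_cos.comp (continuous_const.sub continuous_id)).measurable)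
  have he : fz x = Set.indicator {u : ℝ | 0 < Real.cos (x - u)} Real.cos := by
    ext u; simp [fz, Set.indicator_apply]
  rw [he, intervalIntegrable_iff]
  exact (Real.continuous_cos.intervalIntegrable a b).def'.indicator hs

lemma key_nonneg (x : ℝ) (hx0 : 0 ≤ x) (hx2 : x ≤ π) :
    ∫ u in (-(π/2))..(π/2), fz x u = 1 + Real.cos x := by
  have hπ := Real.pi_pos
  rw [← integral_add_adjacent_intervals (b := x - π/2) (fz_integrable x _ _) (fz_integrable x _ _)]
  have e1 : ∫ u in (-(π/2))..(x - π/2), fz x u = 0 := by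
    rw [intervalIntegral.integral_congr (g := fun _ => 0), intervalIntegral.integral_zero]
    intro u hu
    rw [Set.uIcc_of_le (by linarith)] at hu
    obtain ⟨hu1, hu2⟩ := hu
    have : Real.cos (x - u) ≤ 0 :=
      Real.cos_nonpos_of_pi_div_two_le_of_le (by linarith) (by linarith)
    simp [fz, not_lt.2 this]
  have e2 : ∫ u in (x - π/2)..(π/2), fz x u = 1 + Real.cos x := by
    have hcongr : ∫ u in (x - π/2)..(π/2), fz x u = ∫ u in (x - π/2)..(π/2), Real.cos u := by
      apply intervalIntegral.integral_congr_ae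
      have h0 : (volume : Measure ℝ) {x + π/2} = 0 := measure_singleton _
      filter_upwards [measure_eq_zero_iff_ae_notMem.mp h0] with u hu hmem
      rw [Set.uIoc_of_le (by linarith)] at hmem
      obtain ⟨h1, h2⟩ := hmem
      have hne : u ≠ x + π/2 := hu
      have hlt : u < x + π/2 := lt_of_le_of_ne (by linarith) hne
      have : 0 < Real.cos (x - u) := Real.cos_pos_of_mem_Ioo ⟨by linarith, by linarith⟩
      simp [fz, this]
    rw [hcongr, integral_cos, Real.sin_pi_div_two, Real.sin_sub_pi_div_two]
    ring
  rw [e1, e2, zero_add]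

lemma key_nonpos (x : ℝ) (hx0 : x ≤ 0) (hx2 : -π ≤ x) :
    ∫ u in (-(π/2))..(π/2), fz x u = 1 + Real.cos x := by
  have hπ := Real.pi_pos
  rw [← integral_add_adjacent_intervals (b := x + π/2) (fz_integrable x _ _) (fz_integrable x _ _)]
  have e1 : ∫ u in (-(π/2))..(x + π/2), fz x u = 1 + Real.cos x := by
    have hcongr : ∫ u in (-(π/2))..(x + π/2), fz x u = ∫ u in (-(π/2))..(x + π/2), Real.cos u := by
      apply intervalIntegral.integral_congr_ae
      have h0 : (volume : Measure ℝ) {x + π/2} = 0 := measure_singleton _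
      filter_upwards [measure_eq_zero_iff_ae_notMem.mp h0] with u hu hmem
      rw [Set.uIoc_of_le (by linarith)] at hmem
      obtain ⟨h1, h2⟩ := hmem
      have hne : u ≠ x + π/2 := hu
      have hlt : u < x + π/2 := lt_of_le_of_ne h2 hne
      have : 0 < Real.cos (x - u) := Real.cos_pos_of_mem_Ioo ⟨by linarith, by linarith⟩
      simp [fz, this]
    rw [hcongr, integral_cos, Real.sin_add_pi_div_two, Real.sin_neg, Real.sin_pi_div_two]
    ring
  have e2 : ∫ u in (x + π/2)..(π/2), fz x u = 0 := by
    rw [intervalIntegral.integral_congr (g := fun _ => 0), intervalIntegral.integral_zero]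
    intro u hu
    rw [Set.uIcc_of_le (by linarith)] at hu
    obtain ⟨hu1, hu2⟩ := hu
    have h3 : Real.cos (-(x - u)) ≤ 0 :=
      Real.cos_nonpos_of_pi_div_two_le_of_le (by linarith) (by linarith)
    rw [Real.cos_neg] at h3
    simp [fz, not_lt.2 h3]
  rw [e1, e2, add_zero]

lemma key (x : ℝ) (hx1 : -π ≤ x) (hx2 : x ≤ π) :
    ∫ u in (-(π/2))..(π/2), fz x u = 1 + Real.cos x := by
  rcases le_or_gt 0 x with h | h
  · exact key_nonneg x h hx2
  · exact key_nonpos x h.le hx1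

theorem freiman_unit_circle (Z : Finset ℂ) (hZ : ∀ z ∈ Z, ‖z‖ = 1)
    (η : ℝ) (hη : ‖∑ z ∈ Z, z‖ = η * Z.card) :
    ∃ θ : ℝ, (1 / 2 : ℝ) * (1 + η) * Z.card ≤
      ((Z.filter fun z => 0 < (z * Complex.exp (-(θ : ℂ) * Complex.I)).re).card : ℝ) := by
  rcases Z.eq_empty_or_nonempty with rfl | hne
  · exact ⟨0, by simp⟩
  by_contra hcon
  push_neg at hcon
  have hπ := Real.pi_pos
  have hnpos : 0 < (Z.card : ℝ) := by exact_mod_cast Finset.card_pos.2 hne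
  have hη0 : 0 ≤ η := by
    nlinarith [norm_nonneg (∑ z ∈ Z, z)]
  set c : ℝ := 1 / 2 * (1 + η) * Z.card with hcdef
  have hc : 0 < c := by positivity
  set φ : ℝ := (∑ z ∈ Z, z).arg with hφdef
  set x : ℂ → ℝ := fun z => (z * Complex.exp (-(φ:ℂ) * Complex.I)).arg with hxdef
  have hxz : ∀ z, x z = (z * Complex.exp (-(φ:ℂ) * Complex.I)).arg := fun z => rfl
  have habs : ∀ z ∈ Z, ‖z * Complex.exp (-(φ:ℂ) * Complex.I)‖ = 1 := by
    intro z hz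
    rw [norm_mul, hZ z hz, one_mul]
    have h1 : (-(φ:ℂ)) = ((-φ : ℝ) : ℂ) := by push_cast; ring
    rw [h1, Complex.norm_exp_ofReal_mul_I]
  have hw : ∀ z ∈ Z, z * Complex.exp (-(φ:ℂ) * Complex.I)
      = Complex.exp ((x z : ℂ) * Complex.I) := by
    intro z hz
    conv_lhs => rw [← Complex.norm_mul_exp_arg_mul_I (z * Complex.exp (-(φ:ℂ) * Complex.I))]
    rw [habs z hz, hxz z]
    simp
  have hcond : ∀ u : ℝ, ∀ z ∈ Z,
      (0 < (z * Complex.exp (-((φ + u : ℝ) : ℂ) * Complex.I)).re ↔ 0 < Real.cos (x z - u)) := by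
    intro u z hz
    have h2 : z * Complex.exp (-((φ + u : ℝ) : ℂ) * Complex.I)
        = Complex.exp (((x z - u : ℝ) : ℂ) * Complex.I) := by
      have h1 : (-((φ + u : ℝ) : ℂ) * Complex.I) = (-(φ:ℂ) * Complex.I) + (-(u:ℂ) * Complex.I) := by
        push_cast; ring
      rw [h1, Complex.exp_add, ← mul_assoc, hw z hz, ← Complex.exp_add]
      congr 1; push_cast; ring
    rw [h2, Complex.exp_ofReal_mul_I_re]
  have hsum_eq : ∀ u : ℝ, (∑ z ∈ Z, fz (x z) u)
      = ((Z.filter fun z => 0 < (z * Complex.exp (-(((φ + u : ℝ)) : ℂ) * Complex.I)).re).card : ℝ)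
        * Real.cos u := by
    intro u
    rw [Finset.card_filter]
    simp only [Nat.cast_sum, Nat.cast_ite, Nat.cast_one, Nat.cast_zero]
    rw [Finset.sum_mul]
    apply Finset.sum_congr rfl
    intro z hz
    by_cases h : 0 < Real.cos (x z - u)
    · rw [fz, if_pos h, if_pos ((hcond u z hz).2 h), one_mul]
    · rw [fz, if_neg h, if_neg (fun hh => h ((hcond u z hz).1 hh)), zero_mul]
  have hI : ∫ u in (-(π/2))..(π/2), (∑ z ∈ Z, fz (x z) u) = (1 + η) * Z.card := by
    rw [intervalIntegral.integral_finset_sum (fun z _ => fz_integrable (x z) _ _)]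
    have hkey : ∀ z ∈ Z, ∫ u in (-(π/2))..(π/2), fz (x z) u = 1 + Real.cos (x z) := by
      intro z hz
      rw [hxz z]
      exact key _ (Complex.neg_pi_lt_arg _).le (Complex.arg_le_pi _)
    rw [Finset.sum_congr rfl hkey, Finset.sum_add_distrib, Finset.sum_const, nsmul_eq_mul, mul_one]
    have hcos : ∀ z ∈ Z, Real.cos (x z) = (z * Complex.exp (-(φ:ℂ) * Complex.I)).re := by
      intro z hz
      have hne0 : z * Complex.exp (-(φ:ℂ) * Complex.I) ≠ 0 := by
        intro h0
        have := habs z hz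
        rw [h0] at this
        simp at this
      rw [hxz z, Complex.cos_arg hne0, habs z hz, div_one]
    rw [Finset.sum_congr rfl hcos]
    have hre : (∑ z ∈ Z, (z * Complex.exp (-(φ:ℂ) * Complex.I)).re)
        = ((∑ z ∈ Z, z) * Complex.exp (-(φ:ℂ) * Complex.I)).re := by
      rw [Finset.sum_mul, Complex.re_sum]
    rw [hre]
    have hS : (∑ z ∈ Z, z) * Complex.exp (-(φ:ℂ) * Complex.I)
        = ((‖∑ z ∈ Z, z‖ : ℝ) : ℂ) := by
      conv_lhs => rw [← Complex.norm_mul_exp_arg_mul_I (∑ z ∈ Z, z)]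
      rw [mul_assoc, ← Complex.exp_add, hφdef]
      ring_nf
      simp
    rw [hS, Complex.ofReal_re, hη]
    ring
  set M : ℤ := ⌈c⌉ - 1 with hMdef
  have hMc : (M : ℝ) < c := by
    have h5 := Int.ceil_lt_add_one c
    have : ((M : ℤ) : ℝ) = ((⌈c⌉ : ℤ) : ℝ) - 1 := by rw [hMdef]; push_cast; ring
    linarith
  have h2int : ∫ u in (-(π/2))..(π/2), Real.cos u = 2 := by
    rw [integral_cos]
    simp [Real.sin_pi_div_two]
    norm_num
  have hIle : ∫ u in (-(π/2))..(π/2), (∑ z ∈ Z, fz (x z) u)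
      ≤ ∫ u in (-(π/2))..(π/2), (M:ℝ) * Real.cos u := by
    have hint : IntervalIntegrable (fun u => ∑ z ∈ Z, fz (x z) u) volume (-(π/2)) (π/2) := by
      have h7 := IntervalIntegrable.sum (μ := volume) (a := -(π/2)) (b := π/2)
        (f := fun z => fz (x z)) Z (fun z _ => fz_integrable (x z) _ _)
      convert h7 using 1
      · rfl
      ext u
      simp
    apply intervalIntegral.integral_mono_on (by linarith) hint
      ((continuous_const.mul Real.continuous_cos).intervalIntegrable _ _)
    · intro u hu
      rw [hsum_eq u]
      have hcosnn : 0 ≤ Real.cos u := Real.cos_nonneg_of_mem_Icc (by simpa using hu)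
      have h3 := hcon (φ + u)
      set k := (Z.filter fun z => 0 < (z * Complex.exp (-(((φ + u : ℝ)) : ℂ) * Complex.I)).re).card with hk
      have h4 : (k : ℤ) < ⌈c⌉ := Int.lt_ceil.2 (by exact_mod_cast h3)
      have h5 : (k : ℤ) ≤ M := by omega
      have h6 : (k : ℝ) ≤ (M : ℝ) := by exact_mod_cast h5
      exact mul_le_mul_of_nonneg_right h6 hcosnn
  rw [hI, intervalIntegral.integral_const_mul, h2int] at hIle
  have : (1 + η) * (Z.card : ℝ) = 2 * c := by rw [hcdef]; ring
  linarith
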